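/- For every γ > 1, there exists a unique s* > 0 satisfying γ(1 + s*)/(1 + γ s*) = ln(1 + γ s*), and the function s ↦ ln(1 + γ s)/(1 + s) on [0, ∞) attains its maximum exactly at s = s*. -/

import Mathlib

open Real

/-- Optimal HTT time-sharing ratio: for `γ > 1` there is a unique `s* > 0` satisfying the
stationarity condition `γ(1 + s*)/(1 + γ s*) = ln(1 + γ s*)`, and the rate function
`s ↦ ln(1 + γ s)/(1 + s)` on `[0, ∞)` attains its maximum exactly at `s = s*`. -/
theorem htt_optimal_ratio (γ : ℝ) (hγ : 1 < γ) :
    ∃ s : ℝ, 0 < s ∧ γ * (1 + s) / (1 + γ * s) = Real.log (1 + γ * s) ∧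
      (∀ t : ℝ, 0 < t → γ * (1 + t) / (1 + γ * t) = Real.log (1 + γ * t) → t = s) ∧
      (∀ t : ℝ, 0 ≤ t → t ≠ s →
        Real.log (1 + γ * t) / (1 + t) < Real.log (1 + γ * s) / (1 + s)) := by
  have hγ0 : (0:ℝ) < γ := lt_trans one_pos hγ
  have hpos : ∀ t : ℝ, 0 ≤ t → 0 < 1 + γ * t := by
    intro t ht
    have := mul_nonneg hγ0.le ht
    linarith
  set g : ℝ → ℝ := fun s => γ * (1 + s) / (1 + γ * s) - Real.log (1 + γ * s) with hg_def
  -- derivative of g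
  have hgd : ∀ t : ℝ, 0 ≤ t →
      HasDerivAt g ((γ * (1 + γ * t) - γ * (1 + t) * γ) / (1 + γ * t) ^ 2 - γ / (1 + γ * t)) t := by
    intro t ht
    have hne : 1 + γ * t ≠ 0 := (hpos t ht).ne'
    have hv : HasDerivAt (fun s : ℝ => 1 + γ * s) γ t := by
      simpa using ((hasDerivAt_id t).const_mul γ).const_add 1
    have hu : HasDerivAt (fun s : ℝ => γ * (1 + s)) γ t := by
      simpa using ((hasDerivAt_id t).const_add 1).const_mul γ
    exact (hu.div hv hne).sub (hv.log hne)
  have hgd_neg : ∀ t : ℝ, 0 ≤ t →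
      (γ * (1 + γ * t) - γ * (1 + t) * γ) / (1 + γ * t) ^ 2 - γ / (1 + γ * t) < 0 := by
    intro t ht
    have hp := hpos t ht
    have h1 : (γ * (1 + γ * t) - γ * (1 + t) * γ) / (1 + γ * t) ^ 2 < 0 :=
      div_neg_of_neg_of_pos (by nlinarith) (by positivity)
    have h2 : 0 < γ / (1 + γ * t) := div_pos hγ0 hp
    linarith
  have hgcont : ContinuousOn g (Set.Ici (0:ℝ)) :=
    fun t ht => ((hgd t ht).continuousAt).continuousWithinAt
  have hanti : StrictAntiOn g (Set.Ici (0:ℝ)) := by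
    apply strictAntiOn_of_deriv_neg (convex_Ici 0) hgcont
    intro t ht
    rw [interior_Ici] at ht
    rw [(hgd t ht.le).deriv]
    exact hgd_neg t ht.le
  have hg0 : g 0 = γ := by simp [hg_def]
  -- g is negative at exp γ
  set s₀ : ℝ := Real.exp γ with hs₀_def
  have hs₀pos : 0 < s₀ := Real.exp_pos γ
  have hgs₀ : g s₀ < 0 := by
    have hp := hpos s₀ hs₀pos.le
    have h1 : γ * (1 + s₀) / (1 + γ * s₀) ≤ γ := by
      rw [div_le_iff₀ hp]
      nlinarith [mul_pos (mul_pos hγ0 hs₀pos) (sub_pos.mpr hγ)]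
    have h2 : γ < Real.log (1 + γ * s₀) := by
      have : Real.exp γ < 1 + γ * s₀ := by nlinarith
      calc γ = Real.log (Real.exp γ) := (Real.log_exp γ).symm
        _ < Real.log (1 + γ * s₀) := Real.log_lt_log (Real.exp_pos γ) this
    simp only [hg_def]
    linarith
  -- IVT gives a root
  obtain ⟨s, hsmem, hgs⟩ : ∃ s ∈ Set.Icc (0:ℝ) s₀, g s = 0 := by
    have hsub : Set.Icc (g s₀) (g 0) ⊆ g '' Set.Icc 0 s₀ :=
      intermediate_value_Icc' hs₀pos.le (hgcont.mono (fun x hx => hx.1))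
    have h0mem : (0:ℝ) ∈ Set.Icc (g s₀) (g 0) := ⟨hgs₀.le, by rw [hg0]; exact hγ0.le⟩
    obtain ⟨s, hs, hgs⟩ := hsub h0mem
    exact ⟨s, hs, hgs⟩
  have hspos : 0 < s := by
    rcases lt_or_eq_of_le hsmem.1 with h | h
    · exact h
    · exfalso; rw [← h] at hgs; rw [hg0] at hgs; linarith
  have heq : γ * (1 + s) / (1 + γ * s) = Real.log (1 + γ * s) := by
    have : γ * (1 + s) / (1 + γ * s) - Real.log (1 + γ * s) = 0 := hgs
    linarith
  -- rate function and its derivative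
  set f : ℝ → ℝ := fun s => Real.log (1 + γ * s) / (1 + s) with hf_def
  have hfd : ∀ t : ℝ, 0 ≤ t → HasDerivAt f (g t / (1 + t) ^ 2) t := by
    intro t ht
    have hne : 1 + γ * t ≠ 0 := (hpos t ht).ne'
    have hne2 : 1 + t ≠ 0 := by linarith
    have hv : HasDerivAt (fun s : ℝ => 1 + γ * s) γ t := by
      simpa using ((hasDerivAt_id t).const_mul γ).const_add 1
    have hu : HasDerivAt (fun s : ℝ => Real.log (1 + γ * s)) (γ / (1 + γ * t)) t :=
      hv.log hne
    have hw : HasDerivAt (fun s : ℝ => 1 + s) 1 t := by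
      simpa using (hasDerivAt_id t).const_add 1
    have := hu.div hw hne2
    refine this.congr_deriv ?_
    simp only [hg_def]
    field_simp
  have hfcont : ∀ t : ℝ, 0 ≤ t → ContinuousWithinAt f (Set.Ici (0:ℝ)) t :=
    fun t ht => ((hfd t ht).continuousAt).continuousWithinAt
  -- f strictly increasing on [0, s]
  have hmono : StrictMonoOn f (Set.Icc 0 s) := by
    apply strictMonoOn_of_deriv_pos (convex_Icc 0 s)
    · exact fun t ht => (hfcont t ht.1).mono (fun x hx => hx.1)
    · intro t ht
      rw [interior_Icc] at ht
      rw [(hfd t ht.1.le).deriv]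
      have hgt : 0 < g t := by
        have := hanti (Set.mem_Ici.mpr ht.1.le) (Set.mem_Ici.mpr (ht.1.le.trans ht.2.le)) ht.2
        rw [hgs] at this
        linarith
      have : (0:ℝ) < (1 + t) ^ 2 := by nlinarith [ht.1]
      positivity
  -- f strictly decreasing on [s, ∞)
  have hanti' : StrictAntiOn f (Set.Ici s) := by
    apply strictAntiOn_of_deriv_neg (convex_Ici s)
    · exact fun t ht => (hfcont t (hspos.le.trans ht)).mono
        (fun x hx => le_trans hspos.le hx)
    · intro t ht
      rw [interior_Ici] at ht
      rw [(hfd t (hspos.le.trans ht.le)).deriv]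
      have hgt : g t < 0 := by
        have := hanti (Set.mem_Ici.mpr hspos.le)
          (Set.mem_Ici.mpr (hspos.le.trans ht.le)) ht
        rw [hgs] at this
        linarith
      have hpt : (0:ℝ) < (1 + t) ^ 2 := by nlinarith [hspos.trans ht]
      exact div_neg_of_neg_of_pos hgt hpt
  refine ⟨s, hspos, heq, ?_, ?_⟩
  · intro t ht hteq
    have hgt : g t = 0 := by simp only [hg_def]; linarith
    exact hanti.injOn (Set.mem_Ici.mpr ht.le) (Set.mem_Ici.mpr hspos.le)
      (by rw [hgt, hgs])
  · intro t ht htne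
    rcases lt_or_gt_of_ne htne with hlt | hgt
    · exact hmono ⟨ht, hlt.le⟩ ⟨hspos.le, le_refl s⟩ hlt
    · exact hanti' (Set.mem_Ici.mpr (le_refl s)) (Set.mem_Ici.mpr hgt.le) hgt
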